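/- Let T ≥ 2 and n ≥ 2 be integers, let ε ≥ 0 and δ ∈ [0,1]. Let M be a mechanism assigning to every stream S of length T over universe [n] a Borel probability measure M(S) on ℝ, and suppose M is (ε,δ)-differentially private, i.e., for all neighboring streams S, S' and all Borel sets O ⊆ ℝ, M(S)(O) ≤ e^ε·M(S')(O) + δ. Then there exists a stream S₀ of length T over [n] such that M(S₀)({r ∈ ℝ : |r − F₂(S₀)| ≥ T − 1}) ≥ (1 − δ)/(e^ε + 1). -/

import Mathlib

open Finset MeasureTheory
open scoped Classical

/-- A stream of length `T` over universe `[n]`: each update is a pair `(a, s)` with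
`a ∈ [n]` and `s ∈ {-1, 0, 1}`. -/
def IsStream {T n : ℕ} (S : Fin T → Fin n × ℤ) : Prop :=
  ∀ i, (S i).2 = -1 ∨ (S i).2 = 0 ∨ (S i).2 = 1

/-- Event-level neighboring streams: they differ in at most one index. -/
def Neighboring {T n : ℕ} (S S' : Fin T → Fin n × ℤ) : Prop :=
  ∀ i j, S i ≠ S' i → S j ≠ S' j → i = j

/-- The second frequency moment `F₂(S) = ∑_j (∑_{i : aᵢ = j} sᵢ)²`. -/
noncomputable def F2 {T n : ℕ} (S : Fin T → Fin n × ℤ) : ℤ :=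
  ∑ j : Fin n, (∑ i ∈ Finset.univ.filter (fun i : Fin T => (S i).1 = j), (S i).2) ^ 2

/-- Any `(ε,δ)`-DP mechanism for `F₂` on turnstile streams of length `T` must, on some
stream `S₀`, output a value at additive distance at least `T - 1` from `F₂(S₀)` with
probability at least `(1-δ)/(e^ε + 1)`. -/
theorem stmt4 (T n : ℕ) (hT : 2 ≤ T) (hn : 2 ≤ n) (ε δ : ℝ) (hε : 0 ≤ ε)
    (hδ : δ ∈ Set.Icc (0 : ℝ) 1)
    (M : (Fin T → Fin n × ℤ) → Measure ℝ)
    (hM : ∀ S, IsStream S → IsProbabilityMeasure (M S))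
    (hDP : ∀ S S', IsStream S → IsStream S' → Neighboring S S' →
      ∀ O : Set ℝ, MeasurableSet O →
        M S O ≤ ENNReal.ofReal (Real.exp ε) * M S' O + ENNReal.ofReal δ) :
    ∃ S₀ : Fin T → Fin n × ℤ, IsStream S₀ ∧
      ENNReal.ofReal ((1 - δ) / (Real.exp ε + 1)) ≤
        M S₀ {r : ℝ | (T : ℝ) - 1 ≤ |r - (F2 S₀ : ℝ)|} := by
  set a0 : Fin n := ⟨0, by omega⟩ with ha0
  set i0 : Fin T := ⟨0, by omega⟩ with hi0
  set S : Fin T → Fin n × ℤ := fun _ => (a0, 1) with hSdef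
  set S' : Fin T → Fin n × ℤ := fun i => if i = i0 then (a0, 0) else (a0, 1) with hS'def
  have hS : IsStream S := fun i => Or.inr (Or.inr rfl)
  have hS' : IsStream S' := by
    intro i
    by_cases h : i = i0 <;> simp [hS'def, h]
  have hNbr : Neighboring S S' := by
    intro i j hi hj
    have h1 : i = i0 := by
      by_contra h; exact hi (by simp [hSdef, hS'def, h])
    have h2 : j = i0 := by
      by_contra h; exact hj (by simp [hSdef, hS'def, h])
    rw [h1, h2]
  have hF2S : F2 S = (T:ℤ)^2 := by
    unfold F2
    rw [Finset.sum_eq_single a0]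
    · simp [hSdef, Finset.filter_const]
    · intro b _ hb
      simp [hSdef, Finset.filter_const, Ne.symm hb]
    · simp
  have hF2S' : F2 S' = ((T:ℤ)-1)^2 := by
    unfold F2
    rw [Finset.sum_eq_single a0]
    · have h : (∑ i : Fin T, if i = i0 then (0:ℤ) else 1) = (T:ℤ) - 1 := by
        simp [Finset.sum_ite, Finset.filter_eq', Finset.filter_ne', Finset.card_erase_of_mem]
        omega
      simpa [hS'def, apply_ite] using congrArg (· ^ 2) h
    · intro b _ hb
      have : Finset.univ.filter (fun i : Fin T => (S' i).1 = b) = ∅ := by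
        simp [hS'def, apply_ite, Finset.filter_eq_empty_iff, Ne.symm hb]
      simp [this]
    · simp
  set A : Set ℝ := {r : ℝ | (T : ℝ) - 1 ≤ |r - (F2 S : ℝ)|} with hAdef
  set B : Set ℝ := {r : ℝ | (T : ℝ) - 1 ≤ |r - (F2 S' : ℝ)|} with hBdef
  have hA : MeasurableSet A :=
    measurableSet_le measurable_const ((measurable_id.sub_const _).abs)
  have hTR : (2:ℝ) ≤ (T:ℝ) := by exact_mod_cast hT
  have hsub : Aᶜ ⊆ B := by
    intro r hr
    simp only [hAdef, Set.mem_compl_iff, Set.mem_setOf_eq, not_le] at hr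
    simp only [hBdef, Set.mem_setOf_eq]
    rw [hF2S] at hr; rw [hF2S']
    push_cast at hr ⊢
    rw [abs_lt] at hr
    rw [le_abs]
    left
    nlinarith [hr.1, hr.2]
  by_contra hcon
  push_neg at hcon
  have h1 : ¬ ENNReal.ofReal ((1 - δ)/(Real.exp ε + 1)) ≤ M S A := fun h => by
    have := hcon S hS; rw [← hAdef] at this; exact absurd h (not_le.mpr this)
  have h2 : ¬ ENNReal.ofReal ((1 - δ)/(Real.exp ε + 1)) ≤ M S' B := fun h => by
    have := hcon S' hS'; rw [← hBdef] at this; exact absurd h (not_le.mpr this)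
  have hμ : IsProbabilityMeasure (M S) := hM S hS
  have hν : IsProbabilityMeasure (M S') := hM S' hS'
  have hDP' := hDP S S' hS hS' hNbr Aᶜ hA.compl
  -- real-number contradiction
  set c : ℝ := (1 - δ)/(Real.exp ε + 1) with hc
  have hE : (0:ℝ) < Real.exp ε := Real.exp_pos ε
  have hc0 : 0 ≤ c := div_nonneg (by linarith [hδ.2]) (by linarith)
  have hcE : c * (Real.exp ε + 1) = 1 - δ := by
    rw [hc, div_mul_cancel₀]; positivity
  have hμA : M S A < ENNReal.ofReal c := not_le.mp h1
  have hνB : M S' B < ENNReal.ofReal c := not_le.mp h2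
  have hμAfin : M S A ≠ ⊤ := (measure_lt_top _ A).ne
  have hpa : (M S A).toReal < c := by
    have := (ENNReal.toReal_lt_toReal hμAfin ENNReal.ofReal_ne_top).mpr hμA
    rwa [ENNReal.toReal_ofReal hc0] at this
  have hqb : (M S' B).toReal < c := by
    have := (ENNReal.toReal_lt_toReal (measure_lt_top _ B).ne ENNReal.ofReal_ne_top).mpr hνB
    rwa [ENNReal.toReal_ofReal hc0] at this
  have hνAB : (M S' Aᶜ).toReal ≤ (M S' B).toReal :=
    ENNReal.toReal_mono (measure_lt_top _ B).ne (measure_mono hsub)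
  have hcompl : (M S Aᶜ).toReal = 1 - (M S A).toReal := by
    rw [measure_compl hA hμAfin, measure_univ,
      ENNReal.toReal_sub_of_le prob_le_one (by simp)]
    simp
  have hDPr : (M S Aᶜ).toReal ≤ Real.exp ε * (M S' Aᶜ).toReal + δ := by
    have := ENNReal.toReal_mono (by finiteness) hDP'
    rwa [ENNReal.toReal_add (by finiteness) (by finiteness), ENNReal.toReal_mul,
      ENNReal.toReal_ofReal hE.le, ENNReal.toReal_ofReal hδ.1] at this
  have hν0 : 0 ≤ (M S' Aᶜ).toReal := ENNReal.toReal_nonneg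
  nlinarith [mul_le_mul_of_nonneg_left hνAB hE.le, mul_lt_mul_of_pos_left hqb hE]
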